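/- Let W be an N×N discrete matrix weight, let j ∈ ℤ, and let F and F̃ be N×N matrix polynomials satisfying the weak Pearson equation F(x−j)W(x−j) = W(x)F̃(x)^* for all x ∈ ℤ. Then for all N×N matrix polynomials P and Q the two series ∑_{x=0}^∞ P(x+j)F(x)W(x)Q(x)^* and ∑_{x=0}^∞ P(x)W(x)(Q(x−j)F̃(x))^* converge entrywise absolutely and are equal; that is, ⟨P·D_j, Q⟩_W = ⟨P, Q·D_j^†⟩_W, where (P·D_j)(x) = P(x+j)F(x) and (Q·D_j^†)(x) = Q(x−j)F̃(x). -/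

import Mathlib

open scoped BigOperators ComplexOrder
open Matrix Polynomial Filter

noncomputable section

/-- The space of `N × N` complex matrices. -/
abbrev Mat (N : ℕ) := Matrix (Fin N) (Fin N) ℂ

/-- Evaluation of a matrix polynomial at a (scalar) complex number. -/
def matEval {N : ℕ} (P : Polynomial (Mat N)) (z : ℂ) : Mat N :=
  P.eval (z • (1 : Mat N))

/-- Matrix-valued inner product associated to a discrete matrix weight:
`⟨P,Q⟩_W = ∑_{x=0}^∞ P(x) W(x) Q(x)^*`. -/
def innerW {N : ℕ} (W : ℤ → Mat N) (P Q : Polynomial (Mat N)) : Mat N :=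
  ∑' x : ℕ, matEval P x * W x * (matEval Q x)ᴴ

/-- `W : ℤ → M_N(ℂ)` is an `N × N` discrete matrix weight: positive definite on ℕ,
zero on negative integers, with entrywise absolutely convergent moments of all orders. -/
structure IsWeight {N : ℕ} (W : ℤ → Mat N) : Prop where
  posDef : ∀ x : ℕ, (W (x : ℤ)).PosDef
  neg : ∀ x : ℤ, x < 0 → W x = 0
  moments : ∀ k : ℕ, ∀ i j : Fin N, Summable fun x : ℕ => (x : ℝ) ^ k * ‖W (x : ℤ) i j‖

/-- `P` is the monic orthogonal sequence of the discrete matrix weight `W`. -/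
structure IsMOS {N : ℕ} (W : ℤ → Mat N) (P : ℕ → Polynomial (Mat N)) : Prop where
  monic : ∀ n, (P n).Monic
  deg : ∀ n, (P n).natDegree = n
  orth : ∀ m n, m ≠ n → innerW W (P m) (P n) = 0

/-- Left evaluation `Q⟦M⟧ = ∑_k M^k * A_k` of a matrix polynomial at a matrix. -/
def leftEval {N : ℕ} (Q : Polynomial (Mat N)) (M : Mat N) : Mat N :=
  Q.sum fun k a => M ^ k * a

/-- The block Vandermonde condition for an eigenvalue function `ρ`. -/
def BlockVdm {N : ℕ} (ρ : ℕ → Mat N) : Prop :=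
  ∀ x : ℕ, ∃ k : Fin (x + 1) → ℕ,
    IsUnit (Matrix.of fun p q : Fin (x + 1) × Fin N => (ρ (k p.1) ^ (q.1 : ℕ)) p.2 q.2)

/-- The backward difference operator `(G·∇)(x) = G(x) - G(x-1)`. -/
def nabla {N : ℕ} (G : ℤ → Mat N) : ℤ → Mat N := fun x => G x - G (x - 1)

lemma matEval_entry {N : ℕ} (P : Polynomial (Mat N)) (z : ℂ) (i k : Fin N) :
    matEval P z i k = ∑ n ∈ P.support, z ^ n * (P.coeff n) i k := by
  rw [matEval, Polynomial.eval_eq_sum, Polynomial.sum]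
  have : ∀ n : ℕ, P.coeff n * (z • (1 : Mat N)) ^ n = z ^ n • P.coeff n := by
    intro n
    rw [_root_.smul_pow, one_pow, mul_smul_comm, mul_one]
  simp_rw [this]
  rw [Matrix.sum_apply]
  simp [Matrix.smul_apply, smul_eq_mul]

lemma matEval_entry_bound {N : ℕ} (P : Polynomial (Mat N)) (c : ℂ) :
    ∃ C : ℝ, 0 ≤ C ∧ ∀ (x : ℕ) (i k : Fin N),
      ‖matEval P ((x : ℂ) + c) i k‖ ≤ C * ((x : ℝ) + 1) ^ P.natDegree := by
  set d := P.natDegree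
  refine ⟨(1 + ‖c‖) ^ d * ∑ n ∈ P.support, ∑ p : Fin N × Fin N, ‖(P.coeff n) p.1 p.2‖,
    by positivity, fun x i k => ?_⟩
  rw [matEval_entry]
  calc ‖∑ n ∈ P.support, ((x : ℂ) + c) ^ n * (P.coeff n) i k‖
      ≤ ∑ n ∈ P.support, ‖((x : ℂ) + c) ^ n * (P.coeff n) i k‖ := norm_sum_le _ _
    _ ≤ ∑ n ∈ P.support, ((1 + ‖c‖) * ((x : ℝ) + 1)) ^ d * ‖(P.coeff n) i k‖ := by
        refine Finset.sum_le_sum fun n hn => ?_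
        rw [norm_mul, norm_pow]
        have h1 : ‖(x : ℂ) + c‖ ≤ (1 + ‖c‖) * ((x : ℝ) + 1) := by
          calc ‖(x : ℂ) + c‖ ≤ ‖(x : ℂ)‖ + ‖c‖ := norm_add_le _ _
            _ = (x : ℝ) + ‖c‖ := by rw [Complex.norm_natCast]
            _ ≤ (1 + ‖c‖) * ((x : ℝ) + 1) := by nlinarith [norm_nonneg c, Nat.cast_nonneg (α := ℝ) x]
        have hb : (1:ℝ) ≤ (1 + ‖c‖) * ((x : ℝ) + 1) := by
          nlinarith [norm_nonneg c, Nat.cast_nonneg (α := ℝ) x]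
        have hnd : n ≤ d := Polynomial.le_natDegree_of_mem_supp n hn
        have : ‖(x : ℂ) + c‖ ^ n ≤ ((1 + ‖c‖) * ((x : ℝ) + 1)) ^ d :=
          le_trans (pow_le_pow_left₀ (norm_nonneg _) h1 n) (pow_le_pow_right₀ hb hnd)
        exact mul_le_mul_of_nonneg_right this (norm_nonneg _)
    _ ≤ ∑ n ∈ P.support, ((1 + ‖c‖) * ((x : ℝ) + 1)) ^ d *
          ∑ p : Fin N × Fin N, ‖(P.coeff n) p.1 p.2‖ := by
        refine Finset.sum_le_sum fun n _ => ?_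
        have hs : ‖(P.coeff n) i k‖ ≤ ∑ p : Fin N × Fin N, ‖(P.coeff n) p.1 p.2‖ := by
          have := Finset.single_le_sum (f := fun p : Fin N × Fin N => ‖(P.coeff n) p.1 p.2‖)
            (fun p _ => norm_nonneg _) (Finset.mem_univ (i, k))
          simpa using this
        exact mul_le_mul_of_nonneg_left hs (by positivity)
    _ = (1 + ‖c‖) ^ d * (∑ n ∈ P.support, ∑ p : Fin N × Fin N, ‖(P.coeff n) p.1 p.2‖)
          * ((x : ℝ) + 1) ^ d := by
        rw [← Finset.mul_sum, mul_pow]; ring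

lemma summable_pow_weight {N : ℕ} {W : ℤ → Mat N} (hW : IsWeight W) (d : ℕ) (a b : Fin N) :
    Summable fun x : ℕ => ((x : ℝ) + 1) ^ d * ‖W (x : ℤ) a b‖ := by
  have : ∀ x : ℕ, ((x : ℝ) + 1) ^ d * ‖W (x : ℤ) a b‖ =
      ∑ m ∈ Finset.range (d + 1), (d.choose m : ℝ) * ((x : ℝ) ^ m * ‖W (x : ℤ) a b‖) := by
    intro x
    rw [add_pow, Finset.sum_mul]
    refine Finset.sum_congr rfl fun m _ => ?_
    ring
  rw [show (fun x : ℕ => ((x : ℝ) + 1) ^ d * ‖W (x : ℤ) a b‖) = fun x : ℕ =>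
      ∑ m ∈ Finset.range (d + 1), (d.choose m : ℝ) * ((x : ℝ) ^ m * ‖W (x : ℤ) a b‖) from
    funext this]
  exact summable_sum fun m _ => (hW.moments m a b).mul_left _

lemma mul_entry_bound {N : ℕ} {A B : ℕ → Mat N} {CA CB : ℝ} {dA dB : ℕ}
    (hCA : 0 ≤ CA) (hCB : 0 ≤ CB)
    (hA : ∀ (x : ℕ) (i k : Fin N), ‖A x i k‖ ≤ CA * ((x : ℝ) + 1) ^ dA)
    (hB : ∀ (x : ℕ) (i k : Fin N), ‖B x i k‖ ≤ CB * ((x : ℝ) + 1) ^ dB) :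
    ∀ (x : ℕ) (i k : Fin N), ‖(A x * B x) i k‖ ≤ (N * CA * CB) * ((x : ℝ) + 1) ^ (dA + dB) := by
  intro x i k
  rw [Matrix.mul_apply]
  calc ‖∑ a, A x i a * B x a k‖ ≤ ∑ a, ‖A x i a * B x a k‖ := norm_sum_le _ _
    _ ≤ ∑ _a : Fin N, (CA * ((x : ℝ) + 1) ^ dA) * (CB * ((x : ℝ) + 1) ^ dB) := by
        refine Finset.sum_le_sum fun a _ => ?_
        rw [norm_mul]
        exact mul_le_mul (hA x i a) (hB x a k) (norm_nonneg _) (by positivity)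
    _ = (N * CA * CB) * ((x : ℝ) + 1) ^ (dA + dB) := by
        rw [Finset.sum_const, Finset.card_univ, Fintype.card_fin, nsmul_eq_mul, pow_add]
        ring

lemma summable_triple {N : ℕ} {W : ℤ → Mat N} (hW : IsWeight W)
    {A B : ℕ → Mat N} {CA CB : ℝ} {dA dB : ℕ} (hCA : 0 ≤ CA) (hCB : 0 ≤ CB)
    (hA : ∀ (x : ℕ) (i k : Fin N), ‖A x i k‖ ≤ CA * ((x : ℝ) + 1) ^ dA)
    (hB : ∀ (x : ℕ) (i k : Fin N), ‖B x i k‖ ≤ CB * ((x : ℝ) + 1) ^ dB)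
    (i k : Fin N) :
    Summable fun x : ℕ => ‖(A x * W (x : ℤ) * B x) i k‖ := by
  have hsum : Summable (fun x : ℕ => ∑ p : Fin N × Fin N,
      (CA * CB) * (((x : ℝ) + 1) ^ (dA + dB) * ‖W (x : ℤ) p.1 p.2‖)) :=
    summable_sum fun p _ => ((summable_pow_weight hW (dA + dB) p.1 p.2).mul_left (CA * CB))
  refine Summable.of_nonneg_of_le (fun x => norm_nonneg _) (fun x => ?_) hsum
  rw [Matrix.mul_apply]
  calc ‖∑ a, (A x * W (x : ℤ)) i a * B x a k‖
      ≤ ∑ a, ‖(A x * W (x : ℤ)) i a * B x a k‖ := norm_sum_le _ _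
    _ ≤ ∑ a, ∑ b, ‖A x i b‖ * ‖W (x : ℤ) b a‖ * ‖B x a k‖ := by
        refine Finset.sum_le_sum fun a _ => ?_
        have h2 : ‖(A x * W (x : ℤ)) i a‖ ≤ ∑ b, ‖A x i b‖ * ‖W (x : ℤ) b a‖ := by
          rw [Matrix.mul_apply]
          refine le_trans (norm_sum_le _ _) (Finset.sum_le_sum fun b _ => ?_)
          rw [norm_mul]
        rw [norm_mul, ← Finset.sum_mul]
        exact mul_le_mul_of_nonneg_right h2 (norm_nonneg _)
    _ ≤ ∑ a, ∑ b, (CA * CB) * (((x : ℝ) + 1) ^ (dA + dB) * ‖W (x : ℤ) b a‖) := by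
        refine Finset.sum_le_sum fun a _ => Finset.sum_le_sum fun b _ => ?_
        have h1 : ‖A x i b‖ * ‖W (x : ℤ) b a‖ * ‖B x a k‖ ≤
            (CA * ((x : ℝ) + 1) ^ dA) * ‖W (x : ℤ) b a‖ * (CB * ((x : ℝ) + 1) ^ dB) := by
          refine mul_le_mul (mul_le_mul_of_nonneg_right (hA x i b) (norm_nonneg _))
            (hB x a k) (norm_nonneg _) ?_
          positivity
        refine le_trans h1 (le_of_eq ?_)
        rw [pow_add]; ring
    _ = ∑ p : Fin N × Fin N, (CA * CB) * (((x : ℝ) + 1) ^ (dA + dB) * ‖W (x : ℤ) p.1 p.2‖) := by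
        rw [Finset.sum_comm, ← Finset.univ_product_univ, Finset.sum_product]

def pearsonAux {N : ℕ} (W : ℤ → Mat N) (P Q Ft : Polynomial (Mat N)) (j : ℤ) (y : ℤ) : Mat N :=
  matEval P (y : ℂ) * W y * (matEval Q ((y : ℂ) - (j : ℂ)) * matEval Ft (y : ℂ))ᴴ

/-- a weak Pearson equation yields an adjoint pair of first order
difference operators. -/
theorem weak_pearson_adjoint {N : ℕ} (W : ℤ → Mat N) (hW : IsWeight W) (j : ℤ)
    (F Ft : Polynomial (Mat N))
    (pearson : ∀ x : ℤ, matEval F ((x : ℂ) - (j : ℂ)) * W (x - j)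
      = W x * (matEval Ft (x : ℂ))ᴴ)
    (P Q : Polynomial (Mat N)) :
    (∀ i k : Fin N, Summable fun x : ℕ =>
        ‖(matEval P ((x : ℂ) + (j : ℂ)) * matEval F (x : ℂ) * W (x : ℤ)
            * (matEval Q (x : ℂ))ᴴ) i k‖) ∧
    (∀ i k : Fin N, Summable fun x : ℕ =>
        ‖(matEval P (x : ℂ) * W (x : ℤ)
            * (matEval Q ((x : ℂ) - (j : ℂ)) * matEval Ft (x : ℂ))ᴴ) i k‖) ∧
    (∑' x : ℕ, matEval P ((x : ℂ) + (j : ℂ)) * matEval F (x : ℂ) * W (x : ℤ)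
        * (matEval Q (x : ℂ))ᴴ)
      = ∑' x : ℕ, matEval P (x : ℂ) * W (x : ℤ)
          * (matEval Q ((x : ℂ) - (j : ℂ)) * matEval Ft (x : ℂ))ᴴ := by
  obtain ⟨CPj, hCPj0, hCPj⟩ := matEval_entry_bound P (j : ℂ)
  obtain ⟨CP, hCP0, hCP'⟩ := matEval_entry_bound P (0 : ℂ)
  obtain ⟨CF, hCF0, hCF'⟩ := matEval_entry_bound F (0 : ℂ)
  obtain ⟨CQ, hCQ0, hCQ'⟩ := matEval_entry_bound Q (0 : ℂ)
  obtain ⟨CQj, hCQj0, hCQj'⟩ := matEval_entry_bound Q (-(j : ℂ))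
  obtain ⟨CFt, hCFt0, hCFt'⟩ := matEval_entry_bound Ft (0 : ℂ)
  have hCP : ∀ (x : ℕ) (i k : Fin N),
      ‖matEval P (x : ℂ) i k‖ ≤ CP * ((x : ℝ) + 1) ^ P.natDegree := by
    intro x i k; simpa using hCP' x i k
  have hCF : ∀ (x : ℕ) (i k : Fin N),
      ‖matEval F (x : ℂ) i k‖ ≤ CF * ((x : ℝ) + 1) ^ F.natDegree := by
    intro x i k; simpa using hCF' x i k
  have hCQ : ∀ (x : ℕ) (i k : Fin N),
      ‖matEval Q (x : ℂ) i k‖ ≤ CQ * ((x : ℝ) + 1) ^ Q.natDegree := by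
    intro x i k; simpa using hCQ' x i k
  have hCQj : ∀ (x : ℕ) (i k : Fin N),
      ‖matEval Q ((x : ℂ) - (j : ℂ)) i k‖ ≤ CQj * ((x : ℝ) + 1) ^ Q.natDegree := by
    intro x i k; simpa [sub_eq_add_neg] using hCQj' x i k
  have hCFt : ∀ (x : ℕ) (i k : Fin N),
      ‖matEval Ft (x : ℂ) i k‖ ≤ CFt * ((x : ℝ) + 1) ^ Ft.natDegree := by
    intro x i k; simpa using hCFt' x i k
  -- bound for A₁ = P(x+j) F(x)
  have hA1 := mul_entry_bound (A := fun x : ℕ => matEval P ((x : ℂ) + (j : ℂ)))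
    (B := fun x : ℕ => matEval F (x : ℂ)) hCPj0 hCF0 hCPj hCF
  -- bound for B₁ = Q(x)ᴴ
  have hB1 : ∀ (x : ℕ) (i k : Fin N),
      ‖(matEval Q (x : ℂ))ᴴ i k‖ ≤ CQ * ((x : ℝ) + 1) ^ Q.natDegree := by
    intro x i k
    rw [Matrix.conjTranspose_apply, norm_star]
    exact hCQ x k i
  -- bound for B₂ = (Q(x-j) Ft(x))ᴴ
  have hB2' := mul_entry_bound (A := fun x : ℕ => matEval Q ((x : ℂ) - (j : ℂ)))
    (B := fun x : ℕ => matEval Ft (x : ℂ)) hCQj0 hCFt0 hCQj hCFt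
  have hB2 : ∀ (x : ℕ) (i k : Fin N),
      ‖(matEval Q ((x : ℂ) - (j : ℂ)) * matEval Ft (x : ℂ))ᴴ i k‖
        ≤ (N * CQj * CFt) * ((x : ℝ) + 1) ^ (Q.natDegree + Ft.natDegree) := by
    intro x i k
    rw [Matrix.conjTranspose_apply, norm_star]
    exact hB2' x k i
  have sum1 : ∀ i k : Fin N, Summable fun x : ℕ =>
      ‖(matEval P ((x : ℂ) + (j : ℂ)) * matEval F (x : ℂ) * W (x : ℤ)
          * (matEval Q (x : ℂ))ᴴ) i k‖ := fun i k =>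
    summable_triple hW (by positivity) hCQ0 hA1 hB1 i k
  have sum2 : ∀ i k : Fin N, Summable fun x : ℕ =>
      ‖(matEval P (x : ℂ) * W (x : ℤ)
          * (matEval Q ((x : ℂ) - (j : ℂ)) * matEval Ft (x : ℂ))ᴴ) i k‖ := fun i k =>
    summable_triple hW hCP0 (by positivity) hCP hB2 i k
  refine ⟨sum1, sum2, ?_⟩
  -- Pearson consequence
  have key : ∀ x : ℤ, matEval F (x : ℂ) * W x
      = W (x + j) * (matEval Ft ((x : ℂ) + (j : ℂ)))ᴴ := by
    intro x
    have h := pearson (x + j)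
    push_cast at h
    rw [add_sub_cancel_right, add_sub_cancel_right] at h
    exact h
  have claimA : ∀ x : ℤ,
      matEval P ((x : ℂ) + (j : ℂ)) * matEval F (x : ℂ) * W x * (matEval Q (x : ℂ))ᴴ
        = pearsonAux W P Q Ft j (x + j) := by
    intro x
    have : pearsonAux W P Q Ft j (x + j)
        = matEval P ((x : ℂ) + (j : ℂ)) * W (x + j)
          * ((matEval Ft ((x : ℂ) + (j : ℂ)))ᴴ * (matEval Q (x : ℂ))ᴴ) := by
      simp only [pearsonAux, Matrix.conjTranspose_mul]
      push_cast
      rw [add_sub_cancel_right]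
    rw [this, mul_assoc (matEval P ((x : ℂ) + (j : ℂ))), key x]
    simp only [mul_assoc]
  have claimB : ∀ y : ℤ, y < j → pearsonAux W P Q Ft j y = 0 := by
    intro y hy
    have hWFt : W y * (matEval Ft (y : ℂ))ᴴ = 0 := by
      rw [← pearson y, hW.neg (y - j) (by omega), mul_zero]
    simp only [pearsonAux, Matrix.conjTranspose_mul, ← mul_assoc]
    rw [mul_assoc (matEval P (y : ℂ)), hWFt, mul_zero, zero_mul]
  have claimC : ∀ y : ℤ, y < 0 → pearsonAux W P Q Ft j y = 0 := by
    intro y hy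
    simp only [pearsonAux, hW.neg y hy, mul_zero, zero_mul]
  have inj1 : Function.Injective (fun x : ℕ => (x : ℤ) + j) := by
    intro a b hab; simpa using hab
  have inj2 : Function.Injective (fun x : ℕ => (x : ℤ)) := by
    intro a b hab; simpa using hab
  have hsupp1 : Function.support (pearsonAux W P Q Ft j)
      ⊆ Set.range (fun x : ℕ => (x : ℤ) + j) := by
    intro y hy
    rcases lt_or_ge y j with hlt | hge
    · exact absurd (claimB y hlt) hy
    · exact ⟨(y - j).toNat, by simp [Int.toNat_of_nonneg (by omega : (0:ℤ) ≤ y - j)]⟩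
  have hsupp2 : Function.support (pearsonAux W P Q Ft j)
      ⊆ Set.range (fun x : ℕ => (x : ℤ)) := by
    intro y hy
    rcases lt_or_ge y 0 with hlt | hge
    · exact absurd (claimC y hlt) hy
    · exact ⟨y.toNat, by simp [Int.toNat_of_nonneg hge]⟩
  calc (∑' x : ℕ, matEval P ((x : ℂ) + (j : ℂ)) * matEval F (x : ℂ) * W (x : ℤ)
        * (matEval Q (x : ℂ))ᴴ)
      = ∑' x : ℕ, pearsonAux W P Q Ft j ((x : ℤ) + j) := by
        refine tsum_congr fun x => ?_
        simpa using claimA (x : ℤ)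
    _ = ∑' y : ℤ, pearsonAux W P Q Ft j y := inj1.tsum_eq hsupp1
    _ = ∑' x : ℕ, pearsonAux W P Q Ft j (x : ℤ) := (inj2.tsum_eq hsupp2).symm
    _ = ∑' x : ℕ, matEval P (x : ℂ) * W (x : ℤ)
          * (matEval Q ((x : ℂ) - (j : ℂ)) * matEval Ft (x : ℂ))ᴴ := by
        refine tsum_congr fun x => ?_
        simp [pearsonAux]
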